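/- For κ > -1, the series z_κ(φ) = Σ_{n≥0} (n+1)^κ φ^n converges for every φ ∈ [0,1) and diverges to infinity as φ ↗ 1; moreover z_κ(φ) · (1-φ)^{κ+1} → Γ(κ+1) as φ ↗ 1. -/

import Mathlib

open Real Filter Set MeasureTheory

/-- `z_κ(φ) = Σ_{n≥0} (n+1)^κ φ^n`. -/
noncomputable def zk (κ φ : ℝ) : ℝ := ∑' n : ℕ, ((n : ℝ) + 1) ^ κ * φ ^ n

/-- the Gamma-type integrand -/
noncomputable def gg (κ : ℝ) (x : ℝ) : ℝ := x ^ κ * Real.exp (-x)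

lemma gg_nonneg {κ x : ℝ} (hx : 0 ≤ x) : 0 ≤ gg κ x :=
  mul_nonneg (Real.rpow_nonneg hx κ) (Real.exp_nonneg _)

lemma gg_integrableOn {κ : ℝ} (hκ : -1 < κ) : IntegrableOn (gg κ) (Ioi 0) := by
  have h := Real.GammaIntegral_convergent (s := κ + 1) (by linarith)
  simp only [add_sub_cancel_right] at h
  exact h.congr_fun (fun x _ => mul_comm _ _) measurableSet_Ioi

lemma gg_integral {κ : ℝ} (hκ : -1 < κ) :
    ∫ x in Ioi (0:ℝ), gg κ x = Real.Gamma (κ + 1) := by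
  rw [Real.Gamma_eq_integral (by linarith : (0:ℝ) < κ + 1)]
  simp only [add_sub_cancel_right]
  exact setIntegral_congr_fun measurableSet_Ioi (fun x _ => mul_comm _ _)

lemma measurable_rpow_const (κ : ℝ) : Measurable fun x : ℝ => x ^ κ := by
  have heq : (fun x : ℝ => x ^ κ) = fun x =>
      if x ∈ ({0} : Set ℝ) then (0 : ℝ) ^ κ
      else if x ∈ Ioi (0 : ℝ) then Real.exp (Real.log x * κ)
      else Real.exp (Real.log x * κ) * Real.cos (κ * Real.pi) := by
    funext x
    rcases lt_trichotomy x 0 with h | h | h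
    · rw [if_neg (by simp [h.ne]), if_neg (by simpa using not_lt.2 h.le),
        Real.rpow_def_of_neg h]
    · simp [h]
    · rw [if_neg (by simp [h.ne']), if_pos (mem_Ioi.2 h), Real.rpow_def_of_pos h]
  rw [heq]
  refine Measurable.ite (measurableSet_singleton 0) measurable_const ?_
  refine Measurable.ite measurableSet_Ioi ?_ ?_
  · exact Real.measurable_exp.comp (Real.measurable_log.mul measurable_const)
  · exact (Real.measurable_exp.comp (Real.measurable_log.mul measurable_const)).mul
      measurable_const

lemma gg_measurable (κ : ℝ) : Measurable (gg κ) :=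
  (measurable_rpow_const κ).mul (Real.measurable_exp.comp measurable_neg)

/-- the dominating function -/
noncomputable def bnd (κ : ℝ) (x : ℝ) : ℝ := gg κ x + Real.exp 1 * gg κ (x + 1)

lemma bnd_integrableOn {κ : ℝ} (hκ : -1 < κ) : IntegrableOn (bnd κ) (Ioi 0) := by
  refine (gg_integrableOn hκ).add (Integrable.const_mul ?_ _)
  have h1 : Integrable ((Ioi (0:ℝ)).indicator (gg κ)) := by
    rw [integrable_indicator_iff measurableSet_Ioi]; exact gg_integrableOn hκ
  have h2 : Integrable (fun x => (Ioi (0:ℝ)).indicator (gg κ) (x + 1)) :=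
    h1.comp_add_right 1
  refine (h2.integrableOn).congr_fun (fun x hx => ?_) measurableSet_Ioi
  beta_reduce
  rw [indicator_of_mem (by simp only [mem_Ioi] at hx ⊢; linarith)]

lemma gg_le_bnd {κ x y : ℝ} (hx : 0 < x) (hxy : x ≤ y) (hyx : y ≤ x + 1) :
    gg κ y ≤ bnd κ x := by
  have hy : 0 < y := lt_of_lt_of_le hx hxy
  have hexp : Real.exp (-y) ≤ Real.exp (-x) := Real.exp_le_exp.2 (by linarith)
  rcases le_or_gt κ 0 with hk | hk
  · have h1 : y ^ κ ≤ x ^ κ := Real.rpow_le_rpow_of_nonpos hx hxy hk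
    have : gg κ y ≤ gg κ x :=
      mul_le_mul h1 hexp (Real.exp_nonneg _) (Real.rpow_nonneg hx.le _)
    refine this.trans (le_add_of_nonneg_right ?_)
    exact mul_nonneg (Real.exp_nonneg _) (gg_nonneg (by linarith))
  · have h1 : y ^ κ ≤ (x + 1) ^ κ := Real.rpow_le_rpow hy.le hyx hk.le
    have h2 : gg κ y ≤ (x + 1) ^ κ * Real.exp (-x) :=
      mul_le_mul h1 hexp (Real.exp_nonneg _) (Real.rpow_nonneg (by linarith) _)
    have h3 : Real.exp 1 * gg κ (x + 1) = (x + 1) ^ κ * Real.exp (-x) := by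
      rw [gg, mul_left_comm, ← Real.exp_add, show (1 + -(x + 1)) = -x by ring]
    refine h2.trans ?_
    rw [← h3]
    exact le_add_of_nonneg_left (gg_nonneg hx.le)

/-- the step function -/
noncomputable def stp (κ t x : ℝ) : ℝ := gg κ (t * (⌊x / t⌋ + 1))

lemma stp_measurable (κ t : ℝ) : Measurable (stp κ t) := by
  apply (gg_measurable κ).comp
  exact measurable_const.mul
    (((measurable_of_countable (fun n : ℤ => (n : ℝ))).comp
      (Int.measurable_floor.comp (measurable_id.div_const t))).add measurable_const)

lemma stp_bounds {t x : ℝ} (ht : 0 < t) (hx : 0 < x) :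
    x < t * (⌊x / t⌋ + 1) ∧ t * (⌊x / t⌋ + 1) ≤ x + t := by
  constructor
  · have h := Int.lt_floor_add_one (x / t)
    calc x = t * (x / t) := by field_simp
    _ < t * (⌊x / t⌋ + 1) := by
        exact mul_lt_mul_of_pos_left h ht
  · have h := Int.floor_le (x / t)
    have : t * (⌊x / t⌋ : ℝ) ≤ x := by
      calc t * (⌊x / t⌋ : ℝ) ≤ t * (x / t) := mul_le_mul_of_nonneg_left h ht.le
      _ = x := by field_simp
    nlinarith

lemma stp_aestronglyMeasurable (κ t : ℝ) (s : Set ℝ) :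
    AEStronglyMeasurable (stp κ t) (volume.restrict s) :=
  (stp_measurable κ t).aestronglyMeasurable

lemma stp_le_bnd {κ t x : ℝ} (ht : 0 < t) (ht1 : t ≤ 1) (hx : 0 < x) :
    ‖stp κ t x‖ ≤ bnd κ x := by
  obtain ⟨h1, h2⟩ := stp_bounds ht hx
  have hy : (0:ℝ) < t * (⌊x / t⌋ + 1) := lt_trans hx h1
  rw [stp, Real.norm_eq_abs, abs_of_nonneg (gg_nonneg hy.le)]
  exact gg_le_bnd hx h1.le (by linarith)

lemma stp_integrableOn {κ t : ℝ} (hκ : -1 < κ) (ht : 0 < t) (ht1 : t ≤ 1) :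
    IntegrableOn (stp κ t) (Ici 0) := by
  rw [integrableOn_Ici_iff_integrableOn_Ioi]
  refine Integrable.mono' (bnd_integrableOn hκ) (stp_aestronglyMeasurable κ t _) ?_
  filter_upwards [ae_restrict_mem measurableSet_Ioi] with x hx
  exact stp_le_bnd ht ht1 hx

lemma stp_integral_eq_tsum {κ t : ℝ} (hκ : -1 < κ) (ht : 0 < t) (ht1 : t ≤ 1) :
    ∫ x in Ioi (0:ℝ), stp κ t x = ∑' n : ℕ, t * gg κ (t * (n + 1)) := by
  have hunion : (⋃ n : ℕ, Ico (t * n) (t * (n + 1))) = Ici (0:ℝ) := by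
    ext x
    simp only [mem_iUnion, mem_Ico, mem_Ici]
    constructor
    · rintro ⟨n, h1, _⟩
      exact le_trans (by positivity) h1
    · intro hx
      refine ⟨⌊x / t⌋.toNat, ?_, ?_⟩
      · have h := Int.floor_le (x / t)
        have h0 : (0:ℤ) ≤ ⌊x / t⌋ := Int.floor_nonneg.2 (by positivity)
        have hc : ((⌊x / t⌋.toNat : ℕ) : ℝ) = ((⌊x / t⌋ : ℤ) : ℝ) := by
          exact_mod_cast congrArg (Int.cast : ℤ → ℝ) (Int.toNat_of_nonneg h0)
        rw [hc]
        calc t * ((⌊x / t⌋ : ℤ) : ℝ) ≤ t * (x / t) := mul_le_mul_of_nonneg_left h ht.le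
        _ = x := by field_simp
      · have h := Int.lt_floor_add_one (x / t)
        have h0 : (0:ℤ) ≤ ⌊x / t⌋ := Int.floor_nonneg.2 (by positivity)
        have hc : ((⌊x / t⌋.toNat : ℕ) : ℝ) = ((⌊x / t⌋ : ℤ) : ℝ) := by
          exact_mod_cast congrArg (Int.cast : ℤ → ℝ) (Int.toNat_of_nonneg h0)
        have : x / t < (⌊x / t⌋.toNat : ℝ) + 1 := by rw [hc]; exact h
        calc x = t * (x / t) := by field_simp
        _ < t * (⌊x / t⌋.toNat + 1) := mul_lt_mul_of_pos_left this ht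
  have hmeas : ∀ n : ℕ, MeasurableSet (Ico (t * n) (t * (n + 1))) :=
    fun n => measurableSet_Ico
  have hdisj : Pairwise (Function.onFun Disjoint fun n : ℕ => Ico (t * (n:ℝ)) (t * (n + 1))) := by
    intro m n hmn
    rcases hmn.lt_or_gt with h | h
    · refine Set.Ico_disjoint_Ico.2 ?_
      have : (m:ℝ) + 1 ≤ n := by exact_mod_cast h
      have h2 := mul_le_mul_of_nonneg_left this ht.le
      exact le_max_of_le_right ((min_le_left _ _).trans h2)
    · refine Set.Ico_disjoint_Ico.2 ?_
      have : (n:ℝ) + 1 ≤ m := by exact_mod_cast h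
      have h2 := mul_le_mul_of_nonneg_left this ht.le
      exact le_max_of_le_left ((min_le_right _ _).trans h2)
  have hint : IntegrableOn (stp κ t) (⋃ n : ℕ, Ico (t * (n:ℝ)) (t * (n + 1))) := by
    rw [hunion]; exact stp_integrableOn hκ ht ht1
  have key := MeasureTheory.integral_iUnion hmeas hdisj hint
  rw [hunion] at key
  rw [← MeasureTheory.integral_Ici_eq_integral_Ioi, key]
  congr 1
  funext n
  have heq : EqOn (stp κ t) (fun _ => gg κ (t * (n + 1)))
      (Ico (t * (n:ℝ)) (t * (n + 1))) := by
    intro x hx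
    simp only [mem_Ico] at hx
    have hfl : ⌊x / t⌋ = (n:ℤ) := by
      rw [Int.floor_eq_iff]
      constructor
      · rw [le_div_iff₀ ht]; push_cast; linarith [hx.1]
      · rw [div_lt_iff₀ ht]; push_cast; push_cast at hx; linarith [hx.2]
    rw [stp, hfl]; push_cast; ring_nf
  rw [setIntegral_congr_fun (hmeas n) heq, setIntegral_const]
  simp only [smul_eq_mul, Real.volume_real_Ico]
  rw [show t * ((n:ℝ) + 1) - t * n = t by ring, max_eq_left ht.le]

lemma stp_tendsto {κ : ℝ} (hκ : -1 < κ) :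
    Tendsto (fun t => ∫ x in Ioi (0:ℝ), stp κ t x) (nhdsWithin 0 (Ioi 0))
      (nhds (Real.Gamma (κ + 1))) := by
  rw [← gg_integral hκ]
  refine MeasureTheory.tendsto_integral_filter_of_dominated_convergence (bnd κ)
    (Eventually.of_forall fun t => stp_aestronglyMeasurable κ t _) ?_
    (bnd_integrableOn hκ) ?_
  · filter_upwards [Ioo_mem_nhdsGT_of_mem (by norm_num : (0:ℝ) ∈ Ico (0:ℝ) 1)]
      with t ht
    filter_upwards [ae_restrict_mem measurableSet_Ioi] with x hx
    exact stp_le_bnd ht.1 ht.2.le hx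
  · filter_upwards [ae_restrict_mem measurableSet_Ioi] with x hx
    have hy : Tendsto (fun t => t * ((⌊x / t⌋ : ℝ) + 1)) (nhdsWithin 0 (Ioi 0))
        (nhds x) := by
      have hx' : Tendsto (fun _ : ℝ => x) (nhdsWithin 0 (Ioi 0)) (nhds x) :=
        tendsto_const_nhds
      have hupper : Tendsto (fun t : ℝ => x + t) (nhdsWithin 0 (Ioi 0)) (nhds x) := by
        have : Tendsto (fun t : ℝ => x + t) (nhds 0) (nhds (x + 0)) :=
          (continuous_const.add continuous_id).tendsto 0
        rw [add_zero] at this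
        exact this.mono_left nhdsWithin_le_nhds
      refine tendsto_of_tendsto_of_tendsto_of_le_of_le' hx' hupper ?_ ?_
      · filter_upwards [self_mem_nhdsWithin] with t ht
        exact (stp_bounds ht hx).1.le
      · filter_upwards [self_mem_nhdsWithin] with t ht
        exact (stp_bounds ht hx).2
    have hcont : ContinuousAt (gg κ) x := by
      refine ContinuousAt.mul ?_ (Real.continuous_exp.comp continuous_neg).continuousAt
      exact Real.continuousAt_rpow_const x κ (Or.inl (ne_of_gt hx))
    exact (hcont.tendsto.comp hy)

lemma t_rpow_zk_tendsto {κ : ℝ} (hκ : -1 < κ) :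
    Tendsto (fun t : ℝ => t ^ (κ + 1) * zk κ (Real.exp (-t))) (nhdsWithin 0 (Ioi 0))
      (nhds (Real.Gamma (κ + 1))) := by
  have key : ∀ t : ℝ, 0 < t → t ≤ 1 →
      t ^ (κ + 1) * zk κ (Real.exp (-t)) =
        Real.exp t * ∫ x in Ioi (0:ℝ), stp κ t x := by
    intro t ht ht1
    rw [stp_integral_eq_tsum hκ ht ht1]
    have hterm : ∀ n : ℕ, t * gg κ (t * ((n:ℝ) + 1)) =
        Real.exp (-t) * t ^ (κ + 1) * (((n:ℝ) + 1) ^ κ * Real.exp (-t) ^ n) := by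
      intro n
      rw [gg, Real.mul_rpow ht.le (by positivity), Real.rpow_add_one (ne_of_gt ht),
        show -(t * ((n:ℝ) + 1)) = (n:ℕ) * (-t) + (-t) by push_cast; ring,
        Real.exp_add, Real.exp_nat_mul]
      ring
    rw [tsum_congr hterm, tsum_mul_left]
    rw [zk]
    rw [← mul_assoc, ← mul_assoc, ← Real.exp_add]
    simp
  have h1 : Tendsto (fun t : ℝ => Real.exp t * ∫ x in Ioi (0:ℝ), stp κ t x)
      (nhdsWithin 0 (Ioi 0)) (nhds (Real.Gamma (κ + 1))) := by
    have hexp : Tendsto (fun t : ℝ => Real.exp t) (nhdsWithin 0 (Ioi 0)) (nhds 1) := by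
      have := Real.continuous_exp.tendsto 0
      rw [Real.exp_zero] at this
      exact this.mono_left nhdsWithin_le_nhds
    have := hexp.mul (stp_tendsto hκ)
    rwa [one_mul] at this
  refine h1.congr' ?_
  filter_upwards [Ioo_mem_nhdsGT_of_mem (by norm_num : (0:ℝ) ∈ Ico (0:ℝ) 1)] with t ht
  exact (key t ht.1 ht.2.le).symm

set_option maxHeartbeats 1000000 in
lemma zk_summable {κ : ℝ} (φ : ℝ) (hφ : φ ∈ Set.Ico (0 : ℝ) 1) :
    Summable (fun n : ℕ => ((n : ℝ) + 1) ^ κ * φ ^ n) := by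
  obtain ⟨hφ0, hφ1⟩ := hφ
  rcases le_or_gt κ 0 with hk | hk
  · refine Summable.of_nonneg_of_le (fun n => by positivity) (fun n => ?_)
      (summable_geometric_of_lt_one hφ0 hφ1)
    have h1 : ((n : ℝ) + 1) ^ κ ≤ 1 :=
      Real.rpow_le_one_of_one_le_of_nonpos (by exact_mod_cast Nat.succ_le_succ n.zero_le) hk
    calc ((n : ℝ) + 1) ^ κ * φ ^ n ≤ 1 * φ ^ n :=
      mul_le_mul_of_nonneg_right h1 (by positivity)
    _ = φ ^ n := one_mul _
  · rcases eq_or_lt_of_le hφ0 with h0 | h0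
    · apply summable_of_ne_finset_zero (s := {0})
      intro n hn
      simp only [Finset.mem_singleton] at hn
      rw [← h0, zero_pow hn, mul_zero]
    · set k := ⌈κ⌉₊ with hkdef
      have hs0 : Summable (fun n : ℕ => (n : ℝ) ^ k * φ ^ n) :=
        summable_pow_mul_geometric_of_norm_lt_one k
          (by rw [Real.norm_eq_abs, abs_of_nonneg hφ0]; exact hφ1)
      have hs1 : Summable (fun n : ℕ => ((n + 1 : ℕ) : ℝ) ^ k * φ ^ (n + 1)) :=
        (summable_nat_add_iff 1).2 hs0
      have hs2 : Summable (fun n : ℕ => ((n : ℝ) + 1) ^ (k : ℝ) * φ ^ n) := by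
        refine (hs1.mul_left φ⁻¹).congr (fun n => ?_)
        have hφne : φ ≠ 0 := ne_of_gt h0
        rw [Real.rpow_natCast]
        calc φ⁻¹ * (((n + 1 : ℕ) : ℝ) ^ k * φ ^ (n + 1))
            = (φ⁻¹ * φ) * (((n : ℝ) + 1) ^ k * φ ^ n) := by push_cast; ring
        _ = ((n : ℝ) + 1) ^ k * φ ^ n := by rw [inv_mul_cancel₀ hφne, one_mul]
      refine Summable.of_nonneg_of_le (fun n => by positivity) (fun n => ?_) hs2
      refine mul_le_mul_of_nonneg_right ?_ (by positivity)
      exact Real.rpow_le_rpow_of_exponent_le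
        (by exact_mod_cast Nat.succ_le_succ n.zero_le) (Nat.le_ceil κ)

theorem zk_convergence_and_asymptotics (κ : ℝ) (hκ : -1 < κ) :
    (∀ φ : ℝ, φ ∈ Set.Ico (0 : ℝ) 1 →
      Summable (fun n : ℕ => ((n : ℝ) + 1) ^ κ * φ ^ n)) ∧
    Tendsto (fun φ : ℝ => zk κ φ) (nhdsWithin 1 (Set.Iio 1)) atTop ∧
    Tendsto (fun φ : ℝ => zk κ φ * (1 - φ) ^ (κ + 1)) (nhdsWithin 1 (Set.Iio 1))
      (nhds (Real.Gamma (κ + 1))) := by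
  have hΓ : 0 < Real.Gamma (κ + 1) := Real.Gamma_pos_of_pos (by linarith)
  -- eventually φ ∈ Ioo 0 1
  have hIoo : ∀ᶠ φ : ℝ in nhdsWithin 1 (Set.Iio 1), φ ∈ Ioo (0:ℝ) 1 := by
    have h1 : Ioi (0:ℝ) ∈ nhdsWithin 1 (Set.Iio 1) :=
      nhdsWithin_le_nhds (Ioi_mem_nhds one_pos)
    have h2 : Iio (1:ℝ) ∈ nhdsWithin 1 (Set.Iio 1) := self_mem_nhdsWithin
    filter_upwards [h1, h2] with φ hφ1 hφ2
    exact ⟨hφ1, hφ2⟩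
  -- the map φ ↦ -log φ
  have hmap : Tendsto (fun φ : ℝ => -Real.log φ) (nhdsWithin 1 (Set.Iio 1))
      (nhdsWithin 0 (Ioi 0)) := by
    rw [tendsto_nhdsWithin_iff]
    constructor
    · have : Tendsto (fun φ : ℝ => -Real.log φ) (nhds 1) (nhds (-Real.log 1)) :=
        ((Real.continuousAt_log one_ne_zero).neg).tendsto
      rw [Real.log_one, neg_zero] at this
      exact this.mono_left nhdsWithin_le_nhds
    · filter_upwards [hIoo] with φ hφ
      exact mem_Ioi.2 (by simpa using Real.log_neg hφ.1 hφ.2)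
  -- the third limit
  have T3 : Tendsto (fun φ : ℝ => zk κ φ * (1 - φ) ^ (κ + 1)) (nhdsWithin 1 (Set.Iio 1))
      (nhds (Real.Gamma (κ + 1))) := by
    have h1 := (t_rpow_zk_tendsto hκ).comp hmap
    have hslope : Tendsto (fun φ : ℝ => Real.log φ / (φ - 1)) (nhdsWithin 1 (Set.Iio 1))
        (nhds 1) := by
      have hd : HasDerivAt Real.log 1 1 := by
        simpa using Real.hasDerivAt_log one_ne_zero
      have := hasDerivAt_iff_tendsto_slope.1 hd
      have hmono : nhdsWithin (1:ℝ) (Set.Iio 1) ≤ nhdsWithin 1 {(1:ℝ)}ᶜ :=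
        nhdsWithin_mono 1 (fun x hx => ne_of_lt hx)
      refine (this.mono_left hmono).congr (fun φ => ?_)
      rw [slope_def_field, Real.log_one, sub_zero]
    have hratio : Tendsto (fun φ : ℝ => (1 - φ) / (-Real.log φ))
        (nhdsWithin 1 (Set.Iio 1)) (nhds 1) := by
      have := hslope.inv₀ one_ne_zero
      rw [inv_one] at this
      refine this.congr' ?_
      filter_upwards [hIoo] with φ hφ
      rw [inv_div, show (φ - 1) / Real.log φ = (1 - φ) / (-Real.log φ) by
        rw [show (1 - φ) = -(φ - 1) by ring, neg_div_neg_eq]]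
    have hrpow : Tendsto (fun φ : ℝ => ((1 - φ) / (-Real.log φ)) ^ (κ + 1))
        (nhdsWithin 1 (Set.Iio 1)) (nhds 1) := by
      have := hratio.rpow_const (p := κ + 1) (Or.inl one_ne_zero)
      rwa [Real.one_rpow] at this
    have hmul := h1.mul hrpow
    rw [mul_one] at hmul
    refine hmul.congr' ?_
    filter_upwards [hIoo] with φ hφ
    have hlog : 0 < -Real.log φ := by simpa using Real.log_neg hφ.1 hφ.2
    have h1φ : (0:ℝ) ≤ 1 - φ := by linarith [hφ.2]
    simp only [Function.comp]
    rw [neg_neg, Real.exp_log hφ.1]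
    rw [mul_comm ((-Real.log φ) ^ (κ + 1)) (zk κ φ), mul_assoc,
      ← Real.mul_rpow hlog.le (by positivity),
      mul_div_cancel₀ _ (ne_of_gt hlog)]
  refine ⟨fun φ hφ => zk_summable φ hφ, ?_, T3⟩
  -- divergence
  have hden : Tendsto (fun φ : ℝ => (1 - φ) ^ (κ + 1)) (nhdsWithin 1 (Set.Iio 1))
      (nhdsWithin 0 (Ioi 0)) := by
    rw [tendsto_nhdsWithin_iff]
    constructor
    · have hbase : Tendsto (fun φ : ℝ => 1 - φ) (nhdsWithin 1 (Set.Iio 1)) (nhds 0) := by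
        have : Tendsto (fun φ : ℝ => 1 - φ) (nhds 1) (nhds (1 - 1)) :=
          (continuous_const.sub continuous_id).tendsto 1
        rw [sub_self] at this
        exact this.mono_left nhdsWithin_le_nhds
      have := hbase.rpow_const (p := κ + 1) (Or.inr (by linarith))
      rwa [Real.zero_rpow (by linarith : κ + 1 ≠ 0)] at this
    · filter_upwards [self_mem_nhdsWithin] with φ hφ
      exact mem_Ioi.2 (Real.rpow_pos_of_pos (by simp only [mem_Iio] at hφ; linarith) _)
  have hinv := hden.inv_tendsto_nhdsGT_zero
  have hbig := T3.pos_mul_atTop hΓ hinv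
  refine hbig.congr' ?_
  filter_upwards [self_mem_nhdsWithin] with φ hφ
  have h1φ : (0:ℝ) < 1 - φ := by simp only [mem_Iio] at hφ; linarith
  have hne : (1 - φ) ^ (κ + 1) ≠ 0 := ne_of_gt (Real.rpow_pos_of_pos h1φ _)
  rw [Pi.inv_apply, mul_assoc, mul_inv_cancel₀ hne, mul_one]
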